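/- Let N_c ≥ 1 and 1 ≤ N_e ≤ N_c be natural numbers and p an integer. Let S_0, …, S_{N_c−1} : Ω → ℂ be independent complex random variables with E[S_k] = 0 and E[|S_k|²] = ρ for all k, let c_0, …, c_{N_c−1} ∈ ℂ satisfy |c_k| = 1, and let α ∈ ℂ. Define I_s = (α / N_c) Σ_{i=0}^{N_e−1} Σ_{k=0}^{N_c−1} S_k c_k exp( 2πi (k − p) i / N_c ). Then E[|I_s|²] = (N_e / N_c) |α|² ρ. -/

import Mathlib

open MeasureTheory ProbabilityTheory Finset ComplexConjugate

lemma orth (n : ℕ) (hn : 1 ≤ n) (m : ℤ) :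
    ∑ k : Fin n, Complex.exp (2 * Real.pi * Complex.I * (k : ℂ) * (m : ℂ) / (n : ℂ))
      = if (n : ℤ) ∣ m then (n : ℂ) else 0 := by
  have hne : (n : ℂ) ≠ 0 := Nat.cast_ne_zero.mpr (by omega)
  set z : ℂ := Complex.exp (2 * Real.pi * Complex.I * (m : ℂ) / (n : ℂ)) with hz
  have hzk : ∀ k : Fin n, Complex.exp (2 * Real.pi * Complex.I * (k : ℂ) * (m : ℂ) / (n : ℂ)) = z ^ (k : ℕ) := by
    intro k
    rw [hz, ← Complex.exp_nat_mul]
    ring_nf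
  have hzn : z ^ n = 1 := by
    rw [hz, ← Complex.exp_nat_mul]
    have : (n : ℂ) * (2 * Real.pi * Complex.I * (m : ℂ) / (n : ℂ)) = (m : ℂ) * (2 * Real.pi * Complex.I) := by
      field_simp
    rw [this, Complex.exp_int_mul_two_pi_mul_I]
  simp_rw [hzk]
  rw [Fin.sum_univ_eq_sum_range (fun k => z ^ k)]
  by_cases hd : (n : ℤ) ∣ m
  · obtain ⟨j, hj⟩ := hd
    have hz1 : z = 1 := by
      rw [hz]
      have : 2 * (Real.pi : ℂ) * Complex.I * (m : ℂ) / (n : ℂ) = (j : ℤ) * (2 * Real.pi * Complex.I) := by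
        have : (m : ℂ) = (n : ℂ) * (j : ℂ) := by exact_mod_cast congrArg (fun x : ℤ => (x : ℂ)) hj
        rw [this]; field_simp
      rw [this, Complex.exp_int_mul_two_pi_mul_I]
    rw [if_pos ⟨j, hj⟩]
    simp [hz1]
  · have hz1 : z ≠ 1 := by
      rw [hz]
      intro h
      rw [Complex.exp_eq_one_iff] at h
      obtain ⟨j, hj⟩ := h
      apply hd
      refine ⟨j, ?_⟩
      have h2 : (2 : ℂ) * Real.pi * Complex.I ≠ 0 := by
        simp [Real.pi_ne_zero, Complex.I_ne_zero, Complex.ofReal_ne_zero]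
      have hj' : (2 : ℂ) * Real.pi * Complex.I * (m : ℂ) = (2 : ℂ) * Real.pi * Complex.I * ((n : ℂ) * (j : ℂ)) := by
        field_simp at hj
        linear_combination (2 * (Real.pi : ℂ) * Complex.I) * hj
      have : (m : ℂ) = (n : ℂ) * (j : ℂ) := mul_left_cancel₀ h2 hj'
      exact_mod_cast this
    rw [geom_sum_eq hz1, hzn]
    simp [hd]

lemma indep_integral_mul_cplx {Ω : Type*} [MeasurableSpace Ω] {P : Measure Ω}
    [IsProbabilityMeasure P] {X Y : Ω → ℂ} (h : IndepFun X Y P)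
    (hX : Integrable X P) (hY : Integrable Y P) :
    ∫ ω, X ω * Y ω ∂P = (∫ ω, X ω ∂P) * ∫ ω, Y ω ∂P := by
  have hXr : Integrable (fun ω => (X ω).re) P := by simpa using hX.re
  have hXi : Integrable (fun ω => (X ω).im) P := by simpa using hX.im
  have hYr : Integrable (fun ω => (Y ω).re) P := by simpa using hY.re
  have hYi : Integrable (fun ω => (Y ω).im) P := by simpa using hY.im
  have irr : IndepFun (fun ω => (X ω).re) (fun ω => (Y ω).re) P :=
    h.comp Complex.measurable_re Complex.measurable_re
  have iri : IndepFun (fun ω => (X ω).re) (fun ω => (Y ω).im) P :=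
    h.comp Complex.measurable_re Complex.measurable_im
  have iir : IndepFun (fun ω => (X ω).im) (fun ω => (Y ω).re) P :=
    h.comp Complex.measurable_im Complex.measurable_re
  have iii : IndepFun (fun ω => (X ω).im) (fun ω => (Y ω).im) P :=
    h.comp Complex.measurable_im Complex.measurable_im
  have e1 := irr.integral_mul_eq_mul_integral hXr.1 hYr.1
  have e2 := iri.integral_mul_eq_mul_integral hXr.1 hYi.1
  have e3 := iir.integral_mul_eq_mul_integral hXi.1 hYr.1
  have e4 := iii.integral_mul_eq_mul_integral hXi.1 hYi.1
  simp only [Pi.mul_apply] at e1 e2 e3 e4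
  have hprod : Integrable (fun ω => X ω * Y ω) P := by
    have := h.integrable_mul hX hY
    simpa [Pi.mul_def] using this
  have hre : ∀ f : Ω → ℂ, Integrable f P → (∫ ω, f ω ∂P).re = ∫ ω, (f ω).re ∂P := by
    intro f hf
    simpa using (integral_re hf).symm
  have him : ∀ f : Ω → ℂ, Integrable f P → (∫ ω, f ω ∂P).im = ∫ ω, (f ω).im ∂P := by
    intro f hf
    simpa using (integral_im hf).symm
  apply Complex.ext
  · rw [hre _ hprod, Complex.mul_re, hre _ hX, hre _ hY, him _ hX, him _ hY]
    simp only [Complex.mul_re]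
    rw [integral_sub ((irr.integrable_mul hXr hYr).congr (by simp [Pi.mul_def]))
        ((iii.integrable_mul hXi hYi).congr (by simp [Pi.mul_def]))]
    rw [← e1, ← e4]
  · rw [him _ hprod, Complex.mul_im, hre _ hX, hre _ hY, him _ hX, him _ hY]
    simp only [Complex.mul_im]
    rw [integral_add ((iri.integrable_mul hXr hYi).congr (by simp [Pi.mul_def]))
        ((iir.integrable_mul hXi hYr).congr (by simp [Pi.mul_def]))]
    rw [← e2, ← e3]

lemma memL2_conj {Ω : Type*} [MeasurableSpace Ω] {P : Measure Ω} {f : Ω → ℂ} (h : MemLp f 2 P) :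
    MemLp (fun ω => conj (f ω)) 2 P :=
  ⟨(Complex.conjLIE.continuous.comp_aestronglyMeasurable h.1 : _), by
    rw [show (fun ω => conj (f ω)) = conj f from rfl, eLpNorm_conj]; exact h.2⟩

lemma integrable_mul_L2 {Ω : Type*} [MeasurableSpace Ω] {P : Measure Ω} [IsProbabilityMeasure P]
    {f g : Ω → ℂ} (hf : MemLp f 2 P) (hg : MemLp g 2 P) :
    Integrable (fun ω => f ω * g ω) P := by
  have := hg.smul (p := 2) (q := 2) (r := 1) hf (hpqr := ⟨by norm_num [ENNReal.inv_two_add_inv_two]⟩)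
  rw [← memLp_one_iff_integrable]
  simpa [smul_eq_mul, mul_comm, Pi.mul_def] using this

theorem stmt_6 {Ω : Type*} [MeasurableSpace Ω] (P : Measure Ω) [IsProbabilityMeasure P]
    (Nc Ne : ℕ) (hNc : 1 ≤ Nc) (hNe1 : 1 ≤ Ne) (hNe2 : Ne ≤ Nc) (p : ℤ)
    (S : Fin Nc → Ω → ℂ) (ρ : ℝ)
    (hmeas : ∀ k, Measurable (S k))
    (hindep : iIndepFun S P)
    (hL2 : ∀ k, MemLp (S k) 2 P)
    (hmean : ∀ k, ∫ ω, S k ω ∂P = 0)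
    (hpow : ∀ k, ∫ ω, ‖S k ω‖ ^ 2 ∂P = ρ)
    (c : Fin Nc → ℂ) (hc : ∀ k, ‖c k‖ = 1) (α : ℂ) :
    (∫ ω, ‖(α / (Nc : ℂ)) * ∑ i ∈ Finset.range Ne, ∑ k : Fin Nc,
        S k ω * c k * Complex.exp (2 * Real.pi * Complex.I * (((k : ℕ) : ℂ) - (p : ℂ)) * (i : ℂ) / (Nc : ℂ))‖ ^ 2 ∂P)
      = ((Ne : ℝ) / (Nc : ℝ)) * ‖α‖ ^ 2 * ρ := by
  have hNcC : (Nc : ℂ) ≠ 0 := Nat.cast_ne_zero.mpr (by omega)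
  have hNcR : (Nc : ℝ) ≠ 0 := Nat.cast_ne_zero.mpr (by omega)
  set E : Fin Nc → ℕ → ℂ := fun k i =>
    Complex.exp (2 * Real.pi * Complex.I * (((k : ℕ) : ℂ) - (p : ℂ)) * (i : ℂ) / (Nc : ℂ)) with hE
  set D : Fin Nc → ℂ := fun k => ∑ i ∈ Finset.range Ne, E k i with hD
  set a : Fin Nc → ℂ := fun k => c k * D k with ha
  set T : Ω → ℂ := fun ω => ∑ k : Fin Nc, a k * S k ω with hT
  -- rewrite the integrand
  have hTeq : ∀ ω, (∑ i ∈ Finset.range Ne, ∑ k : Fin Nc, S k ω * c k * E k i) = T ω := by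
    intro ω
    rw [Finset.sum_comm, hT]
    refine Finset.sum_congr rfl fun k _ => ?_
    show ∑ i ∈ Finset.range Ne, S k ω * c k * E k i = c k * (∑ i ∈ Finset.range Ne, E k i) * S k ω
    rw [Finset.mul_sum, Finset.sum_mul]
    exact Finset.sum_congr rfl fun i _ => by ring
  have hstep1 : ∀ ω, ‖(α / (Nc : ℂ)) * ∑ i ∈ Finset.range Ne, ∑ k : Fin Nc,
      S k ω * c k * E k i‖ ^ 2 = (‖α‖ ^ 2 / (Nc : ℝ) ^ 2) * ‖T ω‖ ^ 2 := by
    intro ω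
    rw [hTeq ω, norm_mul, norm_div, Complex.norm_natCast, mul_pow, div_pow]
  -- integrability facts
  have hSconj : ∀ j : Fin Nc, MemLp (fun ω => conj (S j ω)) 2 P := fun j => memL2_conj (hL2 j)
  have hprodInt : ∀ k j : Fin Nc, Integrable (fun ω => S k ω * conj (S j ω)) P :=
    fun k j => integrable_mul_L2 (hL2 k) (hSconj j)
  -- diagonal and off-diagonal expectations
  have hdiag : ∀ k : Fin Nc, ∫ ω, S k ω * conj (S k ω) ∂P = (ρ : ℂ) := by
    intro k
    have h1 : ∀ ω, S k ω * conj (S k ω) = ((‖S k ω‖ ^ 2 : ℝ) : ℂ) := by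
      intro ω
      rw [Complex.mul_conj, Complex.sq_norm]
    simp_rw [h1]
    rw [← hpow k]
    exact integral_ofReal
  have hoff : ∀ k j : Fin Nc, k ≠ j → ∫ ω, S k ω * conj (S j ω) ∂P = 0 := by
    intro k j hkj
    have hind : IndepFun (S k) (fun ω => conj (S j ω)) P :=
      (hindep.indepFun hkj).comp measurable_id Complex.conjLIE.continuous.measurable
    rw [indep_integral_mul_cplx hind ((hL2 k).integrable one_le_two)
      ((hSconj j).integrable one_le_two), hmean k, zero_mul]
  -- expansion of |T|^2
  have hexp : ∀ ω, T ω * conj (T ω)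
      = ∑ k : Fin Nc, ∑ j : Fin Nc, (a k * conj (a j)) * (S k ω * conj (S j ω)) := by
    intro ω
    rw [hT]
    simp only [map_sum, map_mul, Finset.sum_mul_sum]
    exact Finset.sum_congr rfl fun k _ => Finset.sum_congr rfl fun j _ => by ring
  have hTint : Integrable (fun ω => T ω * conj (T ω)) P := by
    have : Integrable (fun ω => ∑ k : Fin Nc, ∑ j : Fin Nc,
        (a k * conj (a j)) * (S k ω * conj (S j ω))) P :=
      integrable_finset_sum _ fun k _ => integrable_finset_sum _ fun j _ =>
        (hprodInt k j).const_mul _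
    exact this.congr (Filter.EventuallyEq.symm (Filter.Eventually.of_forall hexp))
  -- the key expectation computation
  have hTval : ∫ ω, T ω * conj (T ω) ∂P = ((∑ k : Fin Nc, Complex.normSq (a k) : ℝ) : ℂ) * (ρ : ℂ) := by
    have h1 : ∫ ω, T ω * conj (T ω) ∂P
        = ∑ k : Fin Nc, ∑ j : Fin Nc, (a k * conj (a j)) * ∫ ω, S k ω * conj (S j ω) ∂P := by
      simp_rw [hexp]
      rw [integral_finset_sum _ fun k _ => integrable_finset_sum _ fun j _ =>
        (hprodInt k j).const_mul _]
      refine Finset.sum_congr rfl fun k _ => ?_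
      rw [integral_finset_sum _ fun j _ => (hprodInt k j).const_mul _]
      exact Finset.sum_congr rfl fun j _ => integral_const_mul _ _
    rw [h1]
    have h2 : ∀ k : Fin Nc, ∑ j : Fin Nc, (a k * conj (a j)) * ∫ ω, S k ω * conj (S j ω) ∂P
        = ((Complex.normSq (a k) : ℝ) : ℂ) * (ρ : ℂ) := by
      intro k
      rw [Finset.sum_eq_single k]
      · rw [hdiag k, Complex.mul_conj]
      · intro j _ hjk
        rw [hoff k j hjk.symm, mul_zero]
      · intro hk; exact absurd (Finset.mem_univ k) hk
    simp_rw [h2]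
    rw [← Finset.sum_mul]
    push_cast
    ring
  -- |T|^2 integral
  have hTabs : ∫ ω, ‖T ω‖ ^ 2 ∂P = (∑ k : Fin Nc, Complex.normSq (a k)) * ρ := by
    have habs : ∀ ω, (‖T ω‖ ^ 2 : ℝ) = (T ω * conj (T ω)).re := by
      intro ω
      rw [Complex.mul_conj, Complex.sq_norm]
      simp
    simp_rw [habs]
    have := integral_re hTint
    simp only [RCLike.re_to_complex] at this
    rw [this, hTval]
    simp [← Complex.ofReal_mul]
  -- phase sum
  have hkey : ∀ i ∈ Finset.range Ne, ∀ j ∈ Finset.range Ne,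
      (∑ k : Fin Nc, E k i * conj (E k j)) = if i = j then (Nc : ℂ) else 0 := by
    intro i hi j hj
    have hi' := Finset.mem_range.mp hi
    have hj' := Finset.mem_range.mp hj
    have hpt : ∀ k : Fin Nc, E k i * conj (E k j)
        = Complex.exp (2 * Real.pi * Complex.I * ((k : ℕ) : ℂ) * (((i : ℤ) - (j : ℤ) : ℤ) : ℂ) / (Nc : ℂ))
          * Complex.exp (-(2 * Real.pi * Complex.I * (p : ℂ) * ((i : ℂ) - (j : ℂ)) / (Nc : ℂ))) := by
      intro k
      rw [hE]
      simp only
      rw [← Complex.exp_conj, ← Complex.exp_add, ← Complex.exp_add]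
      congr 1
      have hconj : conj ((2 : ℂ) * Real.pi * Complex.I * (((k : ℕ) : ℂ) - (p : ℂ)) * (j : ℂ) / (Nc : ℂ))
          = -((2 : ℂ) * Real.pi * Complex.I * (((k : ℕ) : ℂ) - (p : ℂ)) * (j : ℂ) / (Nc : ℂ)) := by
        simp [map_div₀, map_mul, map_sub, Complex.conj_I, map_ofNat]
        ring
      rw [hconj]
      push_cast
      field_simp
      ring
    simp_rw [hpt]
    rw [← Finset.sum_mul, orth Nc hNc ((i : ℤ) - (j : ℤ))]
    by_cases hij : i = j
    · subst hij
      simp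
    · have hnd : ¬ ((Nc : ℤ) ∣ ((i : ℤ) - (j : ℤ))) := by
        intro hdvd
        have habs : |(i : ℤ) - (j : ℤ)| < (Nc : ℤ) := by
          rw [abs_lt]; omega
        have := Int.eq_zero_of_abs_lt_dvd hdvd habs
        omega
      simp [hnd, hij]
  have hphase : ∑ k : Fin Nc, Complex.normSq (a k) = (Ne : ℝ) * (Nc : ℝ) := by
    have hone : ∀ k : Fin Nc, Complex.normSq (a k) = Complex.normSq (D k) := by
      intro k
      rw [ha]
      simp only [Complex.normSq_mul]
      rw [← Complex.sq_norm (c k), hc k]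
      norm_num
    simp_rw [hone]
    have hC : ∑ k : Fin Nc, (D k * conj (D k)) = (Ne : ℂ) * (Nc : ℂ) := by
      have hDexp : ∀ k : Fin Nc, D k * conj (D k)
          = ∑ i ∈ Finset.range Ne, ∑ j ∈ Finset.range Ne, E k i * conj (E k j) := by
        intro k
        rw [hD]
        simp only [map_sum]
        rw [Finset.sum_mul_sum]
      simp_rw [hDexp]
      calc ∑ k : Fin Nc, ∑ i ∈ Finset.range Ne, ∑ j ∈ Finset.range Ne, E k i * conj (E k j)
          = ∑ i ∈ Finset.range Ne, ∑ k : Fin Nc, ∑ j ∈ Finset.range Ne, E k i * conj (E k j) :=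
            Finset.sum_comm
        _ = ∑ i ∈ Finset.range Ne, ∑ j ∈ Finset.range Ne, ∑ k : Fin Nc, E k i * conj (E k j) :=
            Finset.sum_congr rfl fun i _ => Finset.sum_comm
        _ = ∑ i ∈ Finset.range Ne, ∑ j ∈ Finset.range Ne, (if i = j then (Nc : ℂ) else 0) :=
            Finset.sum_congr rfl fun i hi => Finset.sum_congr rfl fun j hj => hkey i hi j hj
        _ = ∑ i ∈ Finset.range Ne, (Nc : ℂ) := by
            refine Finset.sum_congr rfl fun i hi => ?_
            rw [Finset.sum_ite_eq (Finset.range Ne) i (fun _ => (Nc : ℂ)), if_pos hi]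
        _ = (Ne : ℂ) * (Nc : ℂ) := by
            rw [Finset.sum_const, Finset.card_range]
            simp [nsmul_eq_mul]
    have hC2 : ((∑ k : Fin Nc, Complex.normSq (D k) : ℝ) : ℂ) = (Ne : ℂ) * (Nc : ℂ) := by
      rw [Complex.ofReal_sum]
      simp_rw [Complex.mul_conj] at hC
      exact hC
    have : ((∑ k : Fin Nc, Complex.normSq (D k) : ℝ) : ℂ) = (((Ne : ℝ) * (Nc : ℝ) : ℝ) : ℂ) := by
      rw [hC2]; push_cast; ring
    exact_mod_cast this
  rw [show (fun ω => ‖(α / (Nc : ℂ)) * ∑ i ∈ Finset.range Ne, ∑ k : Fin Nc,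
      S k ω * c k * E k i‖ ^ 2) = fun ω => (‖α‖ ^ 2 / (Nc : ℝ) ^ 2) * ‖T ω‖ ^ 2
    from funext hstep1]
  rw [integral_const_mul, hTabs, hphase]
  field_simp
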